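/- In the computation of local-esh(⊠,T), each Phase 1 move takes ⊠ to a square in a strictly lower row and weakly more-left column, and the squares occupied by ⊠ during Phase 1 form a vertical strip (no two in the same row); each Phase 2 move takes ⊠ to a square in a weakly higher row and strictly more-right column, and the squares occupied by ⊠ during Phase 2 form a horizontal strip (no two in the same column). -/

import Mathlib

/-
Common combinatorial framework for the paper
"Monodromy and K-theory of Schubert curves via generalized jeu de taquin"
(Gillespie–Levinson).

Cells are pairs (row, column), 0-indexed, with row 0 the top row (English
convention).  A skew tableau is modelled as a `Filling`, i.e. a function
`Cell → Option ℕ`; `none` means the cell is not in the (filled part of the)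
shape.  A punctured tableau is a filling together with a distinguished empty
cell `box` (the ⊠).
-/

namespace SC

/-- A cell `(row, column)` of the plane; row `0` is the top row. -/
abbrev Cell : Type := ℕ × ℕ

/-- A partial filling of the cells by natural-number entries. -/
abbrev Filling : Type := Cell → Option ℕ

/-- `readBefore p q` : the cell `p` comes strictly before `q` in reading order
(rows bottom to top, left to right within each row). -/
def readBefore (p q : Cell) : Prop :=
  q.1 < p.1 ∨ (p.1 = q.1 ∧ p.2 < q.2)

/-- Two cells share an edge. -/
def Adj (p q : Cell) : Prop :=
  (p.1 = q.1 ∧ (p.2 + 1 = q.2 ∨ q.2 + 1 = p.2)) ∨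
    (p.2 = q.2 ∧ (p.1 + 1 = q.1 ∨ q.1 + 1 = p.1))

/-- A partition contained in the `k × m` rectangle (parts indexed from `0`). -/
structure Partition (k m : ℕ) where
  part : ℕ → ℕ
  antitone' : ∀ ⦃i j : ℕ⦄, i ≤ j → part j ≤ part i
  le_width : ∀ i, part i ≤ m
  eq_zero : ∀ i, k ≤ i → part i = 0

/-- The size `|λ|` of a partition. -/
def Partition.size {k m : ℕ} (l : Partition k m) : ℕ :=
  ∑ i ∈ Finset.range k, l.part i

/-- The number `ℓ(λ)` of nonzero parts. -/
def Partition.length {k m : ℕ} (l : Partition k m) : ℕ :=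
  ((Finset.range k).filter fun i => l.part i ≠ 0).card

/-- The skew shape `γᶜ/α` inside the `k × m` rectangle: row `i` of `γᶜ` has
length `m - γ (k-1-i)`. -/
def totalShape (k m : ℕ) (a g : Partition k m) : Set Cell :=
  {p | p.1 < k ∧ a.part p.1 ≤ p.2 ∧ p.2 < m - g.part (k - 1 - p.1)}

/-- The set of filled cells of a filling. -/
def shapeOf (T : Filling) : Set Cell := {p | T p ≠ none}

/-- Rows are weakly increasing (on filled cells). -/
def RowsWeak (T : Filling) : Prop :=
  ∀ r c₁ c₂ v₁ v₂, c₁ ≤ c₂ → T (r, c₁) = some v₁ → T (r, c₂) = some v₂ → v₁ ≤ v₂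

/-- Columns are strictly increasing (on filled cells). -/
def ColsStrict (T : Filling) : Prop :=
  ∀ r₁ r₂ c v₁ v₂, r₁ < r₂ → T (r₁, c) = some v₁ → T (r₂, c) = some v₂ → v₁ < v₂

/-- All entries are at least `1`. -/
def PosEntries (T : Filling) : Prop := ∀ p v, T p = some v → 1 ≤ v

open scoped Classical in
/-- The number of cells of the `k × m` rectangle satisfying `P` and carrying
the entry `v`. -/
noncomputable def countP (k m : ℕ) (T : Filling) (P : Cell → Prop) (v : ℕ) : ℕ :=
  ((Finset.range k ×ˢ Finset.range m).filter fun p => P p ∧ T p = some v).card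

/-- The reading word is ballot: every weak suffix contains, for each `i ≥ 1`,
at least as many `i`'s as `(i+1)`'s. -/
def Ballot (k m : ℕ) (T : Filling) : Prop :=
  ∀ (p : Cell) (i : ℕ), 1 ≤ i →
    countP k m T (fun q => q = p ∨ readBefore p q) (i + 1) ≤
      countP k m T (fun q => q = p ∨ readBefore p q) i

/-- The filling has content `β`: the entry `j+1` occurs exactly `β j` times. -/
def HasContent (k m : ℕ) (b : Partition k m) (T : Filling) : Prop :=
  ∀ j : ℕ, countP k m T (fun _ => True) (j + 1) = b.part j

/-- A punctured tableau: a filling together with a distinguished empty cell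
(the `⊠`). -/
structure PState where
  box : Cell
  T : Filling

/-- Membership in `LR(α, □, β, γ)`: `T` is a Littlewood–Richardson skew tableau
of content `β`, `⊠` is an inner co-corner of `T`, and `⊠ ⊔ T` has shape `γᶜ/α`.
(The conditions on `(box.1, box.2 - 1)` and `(box.1 - 1, box.2)` say that the
west and north neighbours of the box are not in the shape; note that if
`box.2 = 0` resp. `box.1 = 0` the displayed cell is the box itself, which is
empty, so the condition is automatic, as it should be.) -/
def MemLR1 (k m : ℕ) (a b g : Partition k m) (x : PState) : Prop :=
  x.box ∈ totalShape k m a g ∧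
  (∀ p : Cell, (x.T p).isSome ↔ (p ∈ totalShape k m a g ∧ p ≠ x.box)) ∧
  RowsWeak x.T ∧ ColsStrict x.T ∧ PosEntries x.T ∧
  Ballot k m x.T ∧ HasContent k m b x.T ∧
  (x.box.1, x.box.2 - 1) ∉ shapeOf x.T ∧ (x.box.1 - 1, x.box.2) ∉ shapeOf x.T

/-- Membership in `LR(α, β, □, γ)`: as in `MemLR1` but the box `⊠` extends `T`
outward (its east and south neighbours are not in the shape). -/
def MemLR2 (k m : ℕ) (a b g : Partition k m) (x : PState) : Prop :=
  x.box ∈ totalShape k m a g ∧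
  (∀ p : Cell, (x.T p).isSome ↔ (p ∈ totalShape k m a g ∧ p ≠ x.box)) ∧
  RowsWeak x.T ∧ ColsStrict x.T ∧ PosEntries x.T ∧
  Ballot k m x.T ∧ HasContent k m b x.T ∧
  (x.box.1, x.box.2 + 1) ∉ shapeOf x.T ∧ (x.box.1 + 1, x.box.2) ∉ shapeOf x.T

/-- Exchange the box with the cell `q`, which receives the box while the old
box cell receives the entry `v`. -/
def swapState (x : PState) (q : Cell) (v : ℕ) : PState :=
  ⟨q, Function.update (Function.update x.T q none) x.box (some v)⟩

/-! ### The local evacuation-shuffle -/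

/-- Phase 1 applies at value `i` iff the box does not precede all of the `i`'s
in reading order. -/
def phase1Cond (i : ℕ) (x : PState) : Prop :=
  ∃ q, x.T q = some i ∧ readBefore q x.box

/-- `q` is the nearest `i` strictly prior to the box in reading order. -/
def Phase1Move (i : ℕ) (x : PState) (q : Cell) : Prop :=
  x.T q = some i ∧ readBefore q x.box ∧
    ∀ q', x.T q' = some i → readBefore q' x.box → q' = q ∨ readBefore q' q

/-- Phase 2 continues at value `i` iff the suffix of the reading word strictly
after the box contains strictly more `i`'s than `(i+1)`'s. -/
def phase2Cond (k m i : ℕ) (x : PState) : Prop :=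
  countP k m x.T (fun q => readBefore x.box q) (i + 1) <
    countP k m x.T (fun q => readBefore x.box q) i

/-- `q` is the nearest `i` strictly after the box in reading order. -/
def Phase2Move (i : ℕ) (x : PState) (q : Cell) : Prop :=
  x.T q = some i ∧ readBefore x.box q ∧
    ∀ q', x.T q' = some i → readBefore x.box q' → q' = q ∨ readBefore q q'

/-- One step of the local evacuation-shuffle algorithm, on states
`(i, phase, x)` where `phase = false` is Phase 1 and `phase = true` is
Phase 2, and `lb = ℓ(β)`.  The algorithm starts at `(1, false, x)` and is
stuck exactly at the states with `i = lb + 1`. -/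
inductive Step (k m lb : ℕ) : ℕ × Bool × PState → ℕ × Bool × PState → Prop
  | p1 {i : ℕ} {x : PState} {q : Cell} (hi : i ≤ lb) (h : Phase1Move i x q) :
      Step k m lb (i, false, x) (i + 1, false, swapState x q i)
  | p1to2 {i : ℕ} {x : PState} (hi : i ≤ lb) (h : ¬ phase1Cond i x) :
      Step k m lb (i, false, x) (i, true, x)
  | p2 {i : ℕ} {x : PState} {q : Cell} (hi : i ≤ lb) (hc : phase2Cond k m i x)
      (h : Phase2Move i x q) :
      Step k m lb (i, true, x) (i, true, swapState x q i)
  | p2inc {i : ℕ} {x : PState} (hi : i ≤ lb) (hc : ¬ phase2Cond k m i x) :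
      Step k m lb (i, true, x) (i + 1, true, x)

/-- The complete run of the local evacuation-shuffle:
`local-esh (x) = y`. -/
def LocalEshRun (k m lb : ℕ) (x y : PState) : Prop :=
  ∃ bl : Bool, Relation.ReflTransGen (Step k m lb) (1, false, x) (lb + 1, bl, y)

/-! ### Jeu de taquin slides -/

/-- One step of an inward jeu de taquin slide: the empty box moves north or
west, the displaced entry moves south-east into the old box.  Ties between the
north and west entries are broken by moving the north entry. -/
inductive InStep : PState → PState → Prop
  | north {x : PState} {r c v : ℕ} (hb : x.box = (r + 1, c)) (hv : x.T (r, c) = some v)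
      (hw : ∀ w, x.T (r + 1, c - 1) = some w → w ≤ v) :
      InStep x (swapState x (r, c) v)
  | west {x : PState} {r c v : ℕ} (hb : x.box = (r, c + 1)) (hv : x.T (r, c) = some v)
      (hn : ∀ w, x.T (r - 1, c + 1) = some w → w < v) :
      InStep x (swapState x (r, c) v)

/-- One step of an outward jeu de taquin slide: the empty box moves south or
east, the displaced entry moves north-west into the old box.  Ties between the
south and east entries are broken by moving the south entry. -/
inductive OutStep : PState → PState → Prop
  | south {x : PState} {r c v : ℕ} (hb : x.box = (r, c)) (hv : x.T (r + 1, c) = some v)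
      (he : ∀ w, x.T (r, c + 1) = some w → v ≤ w) :
      OutStep x (swapState x (r + 1, c) v)
  | east {x : PState} {r c v : ℕ} (hb : x.box = (r, c)) (hv : x.T (r, c + 1) = some v)
      (hs : ∀ w, x.T (r + 1, c) = some w → v < w) :
      OutStep x (swapState x (r, c + 1) v)

/-- Run a step relation to completion. -/
def RunToEnd (R : PState → PState → Prop) (x y : PState) : Prop :=
  Relation.ReflTransGen R x y ∧ ∀ z, ¬ R y z

/-- The shuffle `sh : LR(α,β,□,γ) → LR(α,□,β,γ)`: the complete inward jeu de
taquin slide of `T` into the box. -/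
def ShRun (x y : PState) : Prop := RunToEnd InStep x y

/-! ### Rectification, promotion, and the evacuation-shuffle -/

/-- `S` is (the set of cells of) a skew shape `λ/μ`. -/
def IsSkewShape (S : Set Cell) : Prop :=
  ∃ lam mu : ℕ → ℕ,
    (∀ ⦃i j : ℕ⦄, i ≤ j → lam j ≤ lam i) ∧ (∀ ⦃i j : ℕ⦄, i ≤ j → mu j ≤ mu i) ∧
    (∀ i, mu i ≤ lam i) ∧ ∀ p : Cell, p ∈ S ↔ mu p.1 ≤ p.2 ∧ p.2 < lam p.1

/-- `c` is an inner co-corner of the shape `S` (an addable corner of the inner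
partition). -/
def InnerAddable (S : Set Cell) (c : Cell) : Prop :=
  c ∉ S ∧ IsSkewShape (insert c S) ∧ (c.1, c.2 - 1) ∉ S ∧ (c.1 - 1, c.2) ∉ S

/-- One rectification move on a filling `U`: slide the hole inward from an
inner co-corner `c` through `U` until it exits; `d` records the vacated outer
cell and `V` is the resulting filling. -/
def RectMove (U V : Filling) (d : Cell) : Prop :=
  ∃ c : Cell, InnerAddable (shapeOf U) c ∧ RunToEnd OutStep ⟨c, U⟩ ⟨d, V⟩

/-- A sequence of rectification moves, recording the vacated cells. -/
inductive RectSeq : Filling → List Cell → Filling → Prop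
  | nil (U : Filling) : RectSeq U [] U
  | cons {U V W : Filling} {d : Cell} {ds : List Cell} :
      RectMove U V d → RectSeq V ds W → RectSeq U (d :: ds) W

/-- One un-rectification move: slide the hole outward-to-inward starting at the
recorded cell `d` (this is the inverse of the rectification move that vacated
`d`). -/
def UnRectMove (V W : Filling) (d : Cell) : Prop :=
  d ∉ shapeOf V ∧ ∃ c : Cell, RunToEnd InStep ⟨d, V⟩ ⟨c, W⟩

/-- A sequence of un-rectification moves along a list of recorded cells. -/
inductive UnRectSeq : Filling → List Cell → Filling → Prop
  | nil (U : Filling) : UnRectSeq U [] U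
  | cons {U V W : Filling} {d : Cell} {ds : List Cell} :
      UnRectMove U V d → UnRectSeq V ds W → UnRectSeq U (d :: ds) W

/-- `S` is a straight (non-skew) shape. -/
def IsStraight (S : Set Cell) : Prop :=
  ∀ p ∈ S, ∀ q : Cell, q.1 ≤ p.1 → q.2 ≤ p.2 → q ∈ S

/-- Jeu de taquin promotion step on a rectified tableau containing the entry
`0`: delete the `0`, rectify the remainder (one outward slide of the hole),
and label the vacated outer corner with `lb + 1`. -/
def PromMove (lb : ℕ) (R R' : Filling) : Prop :=
  ∃ (p d : Cell) (V : Filling), R p = some 0 ∧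
    RunToEnd OutStep ⟨p, Function.update R p none⟩ ⟨d, V⟩ ∧
    R' = Function.update V d (some (lb + 1))

/-- The evacuation-shuffle `esh : LR(α,□,β,γ) → LR(α,β,□,γ)`: treat `⊠` as the
entry `0`, rectify recording the order, promote (delete the `0`, rectify the
remainder, label the vacated corner `ℓ(β)+1`), un-rectify along the recorded
order reversed, and turn the entry `ℓ(β)+1` back into `⊠`. -/
def EshRel (lb : ℕ) (x y : PState) : Prop :=
  ∃ (ds : List Cell) (R R' W : Filling),
    RectSeq (Function.update x.T x.box (some 0)) ds R ∧
    IsStraight (shapeOf R) ∧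
    PromMove lb R R' ∧
    UnRectSeq R' ds.reverse W ∧
    W y.box = some (lb + 1) ∧ y.T = Function.update W y.box none

/-- The monodromy operator `ω = sh ∘ local-esh` (as a relation). -/
def OmegaRel (k m lb : ℕ) (x y : PState) : Prop :=
  ∃ z : PState, LocalEshRun k m lb x z ∧ ShRun z y

/-! ### Genomic tableaux -/

/-- `(U, {b₁, b₂})` is a ballot genomic tableau of shape `γᶜ/α` and K-theoretic
content `β`, with repeated (extra) entry `i`; here `b₁` comes before `b₂` in
reading order. -/
def IsGenomic (k m : ℕ) (a b g : Partition k m) (i : ℕ)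
    (U : Filling) (b₁ b₂ : Cell) : Prop :=
  1 ≤ i ∧
  (∀ p : Cell, (U p).isSome ↔ p ∈ totalShape k m a g) ∧
  RowsWeak U ∧ ColsStrict U ∧ PosEntries U ∧
  (∀ j : ℕ, countP k m U (fun _ => True) (j + 1)
      = b.part j + if j + 1 = i then 1 else 0) ∧
  readBefore b₁ b₂ ∧ ¬ Adj b₁ b₂ ∧ U b₁ = some i ∧ U b₂ = some i ∧
  (∀ q : Cell, U q = some i → readBefore b₁ q → readBefore q b₂ → False) ∧
  Ballot k m (Function.update U b₁ none) ∧
  Ballot k m (Function.update U b₂ none)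

/-- `K(γᶜ/α; β)(i)`: ballot genomic tableaux with repeated entry `i`. -/
def KSet (k m : ℕ) (a b g : Partition k m) (i : ℕ) : Set (Filling × Cell × Cell) :=
  {u | IsGenomic k m a b g i u.1 u.2.1 u.2.2}

/-- `K(γᶜ/α; β)`: all ballot genomic tableaux of shape `γᶜ/α` and K-theoretic
content `β`. -/
def KAll (k m : ℕ) (a b g : Partition k m) : Set (Filling × Cell × Cell) :=
  ⋃ i : ℕ, KSet k m a b g i

/-! ### Permutation utilities -/

/-- The reflection length of a permutation: the least number of transpositions
whose product is `g`. -/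
noncomputable def rlength {X : Type*} (g : Equiv.Perm X) : ℕ :=
  letI := Classical.decEq X
  sInf {n : ℕ | ∃ l : List (Equiv.Perm X), l.length = n ∧
    (∀ τ ∈ l, ∃ x y : X, x ≠ y ∧ τ = Equiv.swap x y) ∧ l.prod = g}

/-- The set of orbits of a permutation. -/
def orbitsOf {X : Type*} (g : Equiv.Perm X) : Set (Set X) :=
  {s | ∃ a : X, s = {b | g.SameCycle a b}}

/-- The number of orbits of a permutation. -/
noncomputable def orbitCount {X : Type*} (g : Equiv.Perm X) : ℕ :=
  (orbitsOf g).ncard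

/-! ### The sets `Xᵢ` and the factors `ℓᵢ`, `sᵢ` -/

/-- The box sits between the `(i-1)`-st and `i`-th horizontal strips:
giving the box any value strictly between `i - 1` and `i` would keep rows
weakly increasing and columns strictly increasing. -/
def BoxBetween (i : ℕ) (x : PState) : Prop :=
  (∀ c v, c < x.box.2 → x.T (x.box.1, c) = some v → v ≤ i - 1) ∧
  (∀ c v, x.box.2 < c → x.T (x.box.1, c) = some v → i ≤ v) ∧
  (∀ r v, r < x.box.1 → x.T (r, x.box.2) = some v → v ≤ i - 1) ∧
  (∀ r v, x.box.1 < r → x.T (r, x.box.2) = some v → i ≤ v)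

/-- The set `Xᵢ` of punctured tableaux of content `β` and total shape `γᶜ/α`
with ballot reading word, semistandard rows and columns (omitting `⊠`), in
which `⊠` lies between the `(i-1)`-st and `i`-th horizontal strips. -/
def XSet (k m : ℕ) (a b g : Partition k m) (i : ℕ) : Set PState :=
  {x | x.box ∈ totalShape k m a g ∧
    (∀ p : Cell, (x.T p).isSome ↔ (p ∈ totalShape k m a g ∧ p ≠ x.box)) ∧
    RowsWeak x.T ∧ ColsStrict x.T ∧ PosEntries x.T ∧
    Ballot k m x.T ∧ HasContent k m b x.T ∧ BoxBetween i x}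

/-- One Phase 2 move at value `i` (as a standalone step relation). -/
def P2Step (k m i : ℕ) (x y : PState) : Prop :=
  phase2Cond k m i x ∧ ∃ q, Phase2Move i x q ∧ y = swapState x q i

/-- The operator `ℓᵢ : Xᵢ → Xᵢ₊₁`: the composition of the steps of
`local-esh` exchanging `⊠` with entries equal to `i` (a single Phase 1 move
if some `i` precedes the box, otherwise the Phase 2 loop at value `i`). -/
def LiRel (k m i : ℕ) (x y : PState) : Prop :=
  (∃ q, Phase1Move i x q ∧ y = swapState x q i) ∨
  (¬ phase1Cond i x ∧ Relation.ReflTransGen (P2Step k m i) x y ∧ ¬ phase2Cond k m i y)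

/-- One step of the inward jeu de taquin shuffle in which the box passes an
entry equal to `i`. -/
def SiStep (i : ℕ) (x y : PState) : Prop := InStep x y ∧ x.T y.box = some i

/-- The operator `sᵢ : Xᵢ₊₁ → Xᵢ`: the inward jeu de taquin shuffle of `⊠`
past the entries equal to `i`. -/
def SiRun (i : ℕ) (x y : PState) : Prop :=
  Relation.ReflTransGen (SiStep i) x y ∧ ∀ z, ¬ SiStep i y z

/-- `DownTo j` is the composite `s₁ ∘ s₂ ∘ ⋯ ∘ s_j : X_{j+1} → X₁`. -/
inductive DownTo : ℕ → PState → PState → Prop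
  | zero (x : PState) : DownTo 0 x x
  | succ {j : ℕ} {x y z : PState} : SiRun (j + 1) x y → DownTo j y z → DownTo (j + 1) x z

/-! ### Auxiliary development for stmt_5 -/

section Aux

/-- `readBefore` is irreflexive. -/
lemma rb_irrefl (p : Cell) : ¬ readBefore p p := by
  simp [readBefore]

lemma rb_trans {p q r : Cell} (h1 : readBefore p q) (h2 : readBefore q r) :
    readBefore p r := by
  rcases h1 with h1 | ⟨h1, h1'⟩ <;> rcases h2 with h2 | ⟨h2, h2'⟩ <;>
    simp only [readBefore] <;> omega

lemma rb_asymm {p q : Cell} (h1 : readBefore p q) (h2 : readBefore q p) : False :=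
  rb_irrefl p (rb_trans h1 h2)

lemma rb_total (p q : Cell) : readBefore p q ∨ p = q ∨ readBefore q p := by
  rcases p with ⟨a, b⟩; rcases q with ⟨c, d⟩
  simp only [readBefore, Prod.mk.injEq]
  omega

open scoped Classical in
/-- The finset underlying `countP`. -/
noncomputable def cset (k m : ℕ) (T : Filling) (P : Cell → Prop) (v : ℕ) : Finset Cell :=
  (Finset.range k ×ˢ Finset.range m).filter fun p => P p ∧ T p = some v

lemma countP_eq_card (k m : ℕ) (T : Filling) (P : Cell → Prop) (v : ℕ) :
    countP k m T P v = (cset k m T P v).card := rfl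

lemma mem_cset {k m : ℕ} {T : Filling} {P : Cell → Prop} {v : ℕ} {p : Cell} :
    p ∈ cset k m T P v ↔ (p.1 < k ∧ p.2 < m) ∧ P p ∧ T p = some v := by
  classical
  simp [cset, Finset.mem_filter, Finset.mem_product]

/-- Suffix count, strictly after a cell `c`. -/
noncomputable def cnt (k m : ℕ) (T : Filling) (c : Cell) (v : ℕ) : ℕ :=
  countP k m T (fun s => readBefore c s) v

lemma cnt_congr {k m : ℕ} {T : Filling} {P Q : Cell → Prop} {v : ℕ}
    (h : ∀ p, p.1 < k → p.2 < m → T p = some v → (P p ↔ Q p)) :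
    countP k m T P v = countP k m T Q v := by
  rw [countP_eq_card, countP_eq_card]
  congr 1
  ext p
  simp only [mem_cset]
  constructor
  · rintro ⟨hr, hp, hv⟩; exact ⟨hr, (h p hr.1 hr.2 hv).1 hp, hv⟩
  · rintro ⟨hr, hp, hv⟩; exact ⟨hr, (h p hr.1 hr.2 hv).2 hp, hv⟩

lemma cnt_mono {k m : ℕ} {T : Filling} {P Q : Cell → Prop} {v : ℕ}
    (h : ∀ p, p.1 < k → p.2 < m → T p = some v → P p → Q p) :
    countP k m T P v ≤ countP k m T Q v := by
  rw [countP_eq_card, countP_eq_card]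
  apply Finset.card_le_card
  intro p hp
  rw [mem_cset] at hp ⊢
  exact ⟨hp.1, h p hp.1.1 hp.1.2 hp.2.2 hp.2.1, hp.2.2⟩

/-- If `s` itself satisfies `Q` (but not `P`) and carries `v`, the count goes up. -/
lemma cnt_lt {k m : ℕ} {T : Filling} {P Q : Cell → Prop} {v : ℕ} {s : Cell}
    (hs1 : s.1 < k) (hs2 : s.2 < m) (hv : T s = some v) (hQ : Q s) (hP : ¬ P s)
    (h : ∀ p, p.1 < k → p.2 < m → T p = some v → P p → Q p) :
    countP k m T P v + 1 ≤ countP k m T Q v := by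
  rw [countP_eq_card, countP_eq_card]
  have hsub : insert s (cset k m T P v) ⊆ cset k m T Q v := by
    intro p hp
    rcases Finset.mem_insert.1 hp with rfl | hp
    · exact mem_cset.2 ⟨⟨hs1, hs2⟩, hQ, hv⟩
    · rw [mem_cset] at hp ⊢
      exact ⟨hp.1, h p hp.1.1 hp.1.2 hp.2.2 hp.2.1, hp.2.2⟩
  have hns : s ∉ cset k m T P v := by
    rw [mem_cset]; tauto
  calc (cset k m T P v).card + 1 = (insert s (cset k m T P v)).card := by
        rw [Finset.card_insert_of_notMem hns]
      _ ≤ _ := Finset.card_le_card hsub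

lemma cnt_or_le {k m : ℕ} {T : Filling} {P Q : Cell → Prop} {v : ℕ} :
    countP k m T (fun p => P p ∨ Q p) v ≤ countP k m T P v + countP k m T Q v := by
  rw [countP_eq_card, countP_eq_card, countP_eq_card]
  have : cset k m T (fun p => P p ∨ Q p) v ⊆ cset k m T P v ∪ cset k m T Q v := by
    intro p hp
    rw [mem_cset] at hp
    rcases hp.2.1 with h | h
    · exact Finset.mem_union_left _ (mem_cset.2 ⟨hp.1, h, hp.2.2⟩)
    · exact Finset.mem_union_right _ (mem_cset.2 ⟨hp.1, h, hp.2.2⟩)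
  calc _ ≤ (cset k m T P v ∪ cset k m T Q v).card := Finset.card_le_card this
    _ ≤ _ := Finset.card_union_le _ _

end Aux

section Aux2

open scoped Classical in
/-- The key counting identity for a swap: the box `b` (empty) receives `i`,
the cell `q` (which held `i`) is emptied. -/
lemma cnt_swap_eq {k m : ℕ} {T : Filling} {b q : Cell} {i : ℕ}
    (hb : T b = none) (hq : T q = some i) (hbk : b.1 < k) (hbm : b.2 < m)
    (hqk : q.1 < k) (hqm : q.2 < m) (P : Cell → Prop) :
    countP k m (Function.update (Function.update T q none) b (some i)) P i
      + (if P q then 1 else 0)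
    = countP k m T P i + (if P b then 1 else 0) := by
  classical
  have hne : q ≠ b := by rintro rfl; rw [hb] at hq; exact (nomatch hq)
  set T' := Function.update (Function.update T q none) b (some i) with hT'
  have hT'b : T' b = some i := by simp [hT']
  have hT'q : T' q = none := by
    simp [hT', Function.update_of_ne hne, Function.update_self]
  have hT'o : ∀ p, p ≠ b → p ≠ q → T' p = T p := by
    intro p h1 h2
    simp [hT', Function.update_of_ne h1, Function.update_of_ne h2]
  rw [countP_eq_card, countP_eq_card]
  have key : (cset k m T' P i).erase b = (cset k m T P i).erase q := by
    ext p
    simp only [Finset.mem_erase, mem_cset]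
    constructor
    · rintro ⟨hpb, hr, hp, hv⟩
      have hpq : p ≠ q := by rintro rfl; rw [hT'q] at hv; exact nomatch hv
      exact ⟨hpq, hr, hp, by rwa [hT'o p hpb hpq] at hv⟩
    · rintro ⟨hpq, hr, hp, hv⟩
      have hpb : p ≠ b := by rintro rfl; rw [hb] at hv; exact nomatch hv
      exact ⟨hpb, hr, hp, by rwa [hT'o p hpb hpq]⟩
  have hbS' : ∀ _ : P b, b ∈ cset k m T' P i := fun h => mem_cset.2 ⟨⟨hbk, hbm⟩, h, hT'b⟩
  have hqS : ∀ _ : P q, q ∈ cset k m T P i := fun h => mem_cset.2 ⟨⟨hqk, hqm⟩, h, hq⟩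
  have hbS'n : ¬ P b → b ∉ cset k m T' P i := fun h hmem => h (mem_cset.1 hmem).2.1
  have hqSn : ¬ P q → q ∉ cset k m T P i := fun h hmem => h (mem_cset.1 hmem).2.1
  by_cases hPq : P q <;> by_cases hPb : P b
  · rw [if_pos hPq, if_pos hPb]
    have e1 := Finset.card_erase_add_one (hbS' hPb)
    have e2 := Finset.card_erase_add_one (hqS hPq)
    rw [key] at e1
    rw [← e1, ← e2]
  · rw [if_pos hPq, if_neg hPb]
    have e1 : (cset k m T' P i).erase b = cset k m T' P i :=
      Finset.erase_eq_of_notMem (hbS'n hPb)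
    have e2 := Finset.card_erase_add_one (hqS hPq)
    rw [e1] at key
    rw [key]
    exact e2
  · rw [if_neg hPq, if_pos hPb]
    have e2 : (cset k m T P i).erase q = cset k m T P i :=
      Finset.erase_eq_of_notMem (hqSn hPq)
    have e1 := Finset.card_erase_add_one (hbS' hPb)
    rw [key, e2] at e1
    exact e1.symm
  · rw [if_neg hPq, if_neg hPb]
    have e1 : (cset k m T' P i).erase b = cset k m T' P i :=
      Finset.erase_eq_of_notMem (hbS'n hPb)
    have e2 : (cset k m T P i).erase q = cset k m T P i :=
      Finset.erase_eq_of_notMem (hqSn hPq)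
    rw [e1, e2] at key
    rw [key]

/-- A swap does not change counts for values other than the moved one. -/
lemma cnt_swap_ne {k m : ℕ} {T : Filling} {b q : Cell} {i v : ℕ}
    (hb : T b = none) (hq : T q = some i) (hv : v ≠ i) (P : Cell → Prop) :
    countP k m (Function.update (Function.update T q none) b (some i)) P v
    = countP k m T P v := by
  classical
  have hne : q ≠ b := by rintro rfl; rw [hb] at hq; exact (nomatch hq)
  rw [countP_eq_card, countP_eq_card]
  congr 1
  ext p
  simp only [mem_cset]
  constructor
  · rintro ⟨hr, hp, hval⟩
    refine ⟨hr, hp, ?_⟩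
    by_cases h1 : p = b
    · subst h1; rw [Function.update_self] at hval
      exact absurd (Option.some.inj hval).symm hv
    by_cases h2 : p = q
    · subst h2
      rw [Function.update_of_ne h1, Function.update_self] at hval
      exact nomatch hval
    · rwa [Function.update_of_ne h1, Function.update_of_ne h2] at hval
  · rintro ⟨hr, hp, hval⟩
    refine ⟨hr, hp, ?_⟩
    by_cases h1 : p = b
    · subst h1; rw [hb] at hval; exact nomatch hval
    by_cases h2 : p = q
    · subst h2; rw [hq] at hval
      exact absurd (Option.some.inj hval).symm hv
    · rwa [Function.update_of_ne h1, Function.update_of_ne h2]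

end Aux2

section Aux3

lemma mem_rect {k m : ℕ} {a g : Partition k m} {p : Cell}
    (h : p ∈ totalShape k m a g) : p.1 < k ∧ p.2 < m := by
  obtain ⟨h1, _, h3⟩ := h
  exact ⟨h1, lt_of_lt_of_le h3 (Nat.sub_le _ _)⟩

/-- A cell between two cells of the shape (in the weak south-west/north-east
sense) is in the shape. -/
lemma mem_seg {k m : ℕ} {a g : Partition k m} {rt ct rb cb r c : ℕ}
    (htop : (rt, ct) ∈ totalShape k m a g) (hbot : (rb, cb) ∈ totalShape k m a g)
    (hr1 : rt ≤ r) (hr2 : r ≤ rb) (hc1 : ct ≤ c) (hc2 : c ≤ cb) :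
    (r, c) ∈ totalShape k m a g := by
  simp only [totalShape, Set.mem_setOf_eq] at htop hbot ⊢
  obtain ⟨hk1, ha1, hb1⟩ := htop
  obtain ⟨hk2, ha2, hb2⟩ := hbot
  refine ⟨lt_of_le_of_lt hr2 hk2, le_trans (le_trans (a.antitone' hr1) ha1) hc1, ?_⟩
  have hg : g.part (k - 1 - r) ≤ g.part (k - 1 - rb) := by
    apply g.antitone'
    omega
  have h2 : m - g.part (k - 1 - rb) ≤ m - g.part (k - 1 - r) := Nat.sub_le_sub_left hg m
  omega

/-- Strict increase along a filled column segment. -/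
lemma col_chain {T : Filling} (hcol : ColsStrict T) {c r1 r2 v1 v2 : ℕ}
    (h12 : r1 ≤ r2)
    (hf : ∀ r, r1 ≤ r → r ≤ r2 → ∃ v, T (r, c) = some v)
    (h1 : T (r1, c) = some v1) (h2 : T (r2, c) = some v2) :
    v1 + (r2 - r1) ≤ v2 := by
  obtain ⟨d, rfl⟩ := Nat.exists_eq_add_of_le h12
  clear h12
  induction d generalizing v2 with
  | zero =>
    simp only [Nat.add_zero] at h2 ⊢
    rw [h1] at h2
    simp [Option.some.inj h2]
  | succ n ih =>
    obtain ⟨v', hv'⟩ := hf (r1 + n) (Nat.le_add_right _ _) (by omega)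
    have hlt : v' < v2 := hcol (r1 + n) (r1 + (n+1)) c v' v2 (by omega) hv' h2
    have := ih (fun r hr hr' => hf r hr (by omega)) hv'
    omega

/-- `p` is `t` or comes after `t` in reading order. -/
def atOrAfter (t p : Cell) : Prop := p = t ∨ readBefore t p

/-- Ballotness in the "strict suffix" form. -/
def BallotX (k m : ℕ) (T : Filling) : Prop :=
  ∀ (c : Cell) (i : ℕ), 1 ≤ i →
    countP k m T (fun s => readBefore c s) (i + 1) ≤
      countP k m T (fun s => readBefore c s) i

lemma ballotX_of_ballot {k m : ℕ} {T : Filling} (hb : Ballot k m T) :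
    BallotX k m T := by
  intro c i hi
  have h := hb (c.1, c.2 + 1) i hi
  have hcg : ∀ v : ℕ, countP k m T (fun s => s = (c.1, c.2+1) ∨ readBefore (c.1, c.2+1) s) v
      = countP k m T (fun s => readBefore c s) v := by
    intro v
    apply cnt_congr
    intro p _ _ _
    rcases p with ⟨pr, pc⟩
    rcases c with ⟨cr, cc⟩
    simp only [readBefore, Prod.mk.injEq]
    omega
  rw [hcg (i+1), hcg i] at h
  exact h

/-- The inclusive-suffix form of ballotness, derived from `BallotX`. -/
lemma ballotX_incl {k m : ℕ} {T : Filling} (hb : BallotX k m T) (t : Cell)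
    {i : ℕ} (hi : 1 ≤ i) :
    countP k m T (atOrAfter t) (i + 1) ≤ countP k m T (atOrAfter t) i := by
  rcases t with ⟨tr, tc⟩
  rcases tc with _ | c'
  · have hcg : ∀ v : ℕ, countP k m T (atOrAfter (tr, 0)) v
        = countP k m T (fun s => readBefore (tr + 1, m) s) v := by
      intro v
      apply cnt_congr
      intro p _ hpm _
      rcases p with ⟨pr, pc⟩
      simp only [atOrAfter, readBefore, Prod.mk.injEq]
      omega
    rw [hcg (i+1), hcg i]
    exact hb _ i hi
  · have hcg : ∀ v : ℕ, countP k m T (atOrAfter (tr, c' + 1)) v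
        = countP k m T (fun s => readBefore (tr, c') s) v := by
      intro v
      apply cnt_congr
      intro p _ _ _
      rcases p with ⟨pr, pc⟩
      simp only [atOrAfter, readBefore, Prod.mk.injEq]
      omega
    rw [hcg (i+1), hcg i]
    exact hb _ i hi

end Aux3

section Aux4

/-- The common part of the invariant maintained throughout `local-esh`. -/
structure InvC (k m : ℕ) (a g : Partition k m) (z : PState) : Prop where
  hbox : z.box ∈ totalShape k m a g
  hshape : ∀ p, (z.T p).isSome ↔ (p ∈ totalShape k m a g ∧ p ≠ z.box)
  hrow : RowsWeak z.T
  hcol : ColsStrict z.T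
  hpos : PosEntries z.T
  hballot : BallotX k m z.T

/-- The extra invariant during Phase 2 at value `i`. -/
def Phase2Inv (i : ℕ) (z : PState) : Prop :=
  (∀ c v, c < z.box.2 → z.T (z.box.1, c) = some v → v ≤ i) ∧
  (∀ c v, z.box.2 < c → z.T (z.box.1, c) = some v → i ≤ v) ∧
  (∀ r v, r < z.box.1 → z.T (r, z.box.2) = some v → v < i) ∧
  (∀ r v, z.box.1 < r → z.T (r, z.box.2) = some v → i + 1 ≤ v)

/-- The extra invariant during Phase 1 at value `i`. -/
def Phase1Inv (k m i : ℕ) (z : PState) : Prop :=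
  BoxBetween i z ∧
    (2 ≤ i → countP k m z.T (fun s => readBefore z.box s) i
      < countP k m z.T (fun s => readBefore z.box s) (i - 1))

/-- The full invariant on algorithm states. -/
def Inv (k m : ℕ) (a g : Partition k m) (st : ℕ × Bool × PState) : Prop :=
  1 ≤ st.1 ∧ InvC k m a g st.2.2 ∧
    (if st.2.1 then Phase2Inv st.1 st.2.2 else Phase1Inv k m st.1 st.2.2)

lemma InvC.box_none {k m : ℕ} {a g : Partition k m} {z : PState}
    (h : InvC k m a g z) : z.T z.box = none := by
  have := h.hshape z.box
  simp at this
  exact Option.not_isSome_iff_eq_none.1 (by simp [this])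

lemma InvC.filled_mem {k m : ℕ} {a g : Partition k m} {z : PState}
    (h : InvC k m a g z) {p : Cell} {v : ℕ} (hv : z.T p = some v) :
    p ∈ totalShape k m a g ∧ p ≠ z.box :=
  (h.hshape p).1 (by simp [hv])

lemma InvC.filled_of_mem {k m : ℕ} {a g : Partition k m} {z : PState}
    (h : InvC k m a g z) {p : Cell} (hp : p ∈ totalShape k m a g) (hpb : p ≠ z.box) :
    ∃ v, z.T p = some v := by
  have := (h.hshape p).2 ⟨hp, hpb⟩
  exact Option.isSome_iff_exists.1 this

/-- Claim 1: a Phase 1 move goes strictly down and weakly left. -/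
lemma claim1 {k m : ℕ} {a g : Partition k m} {i : ℕ} {z : PState} {q : Cell}
    (h1 : 1 ≤ i) (hI : InvC k m a g z) (hBB : BoxBetween i z)
    (hq : Phase1Move i z q) :
    z.box.1 < q.1 ∧ q.2 ≤ z.box.2 := by
  obtain ⟨hqv, hqb, _⟩ := hq
  have hrow : z.box.1 < q.1 := by
    rcases hqb with h | ⟨h, h'⟩
    · exact h
    · exfalso
      have hqe : (z.box.1, q.2) = q := by rw [← h]
      have := hBB.1 q.2 i h' (by rw [hqe]; exact hqv)
      omega
  refine ⟨hrow, ?_⟩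
  by_contra hcon
  push_neg at hcon
  have hqS : q ∈ totalShape k m a g := (hI.filled_mem hqv).1
  have hbS : z.box ∈ totalShape k m a g := hI.hbox
  have hbS' : (z.box.1, z.box.2) ∈ totalShape k m a g := by
    rw [Prod.mk.eta]; exact hbS
  have hqS' : (q.1, q.2) ∈ totalShape k m a g := by
    rw [Prod.mk.eta]; exact hqS
  have hfill : ∀ r, z.box.1 ≤ r → r ≤ q.1 → ∃ v, z.T (r, q.2) = some v := by
    intro r hr hr'
    apply hI.filled_of_mem
    · exact mem_seg hbS' hqS' hr hr' (le_of_lt hcon) le_rfl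
    · intro hh
      have := congrArg Prod.snd hh
      simp only at this
      omega
  obtain ⟨v0, hv0⟩ := hfill z.box.1 le_rfl (le_of_lt hrow)
  have hv0i : i ≤ v0 := hBB.2.1 q.2 v0 hcon hv0
  have hchain := col_chain hI.hcol (le_of_lt hrow) hfill hv0
    (by rw [Prod.mk.eta]; exact hqv)
  omega

/-- Claim 2: a Phase 2 move goes weakly up and strictly right. -/
lemma claim2 {k m : ℕ} {a g : Partition k m} {i : ℕ} {z : PState} {q : Cell}
    (hI : InvC k m a g z) (hP : Phase2Inv i z) (hq : Phase2Move i z q) :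
    q.1 ≤ z.box.1 ∧ z.box.2 < q.2 := by
  obtain ⟨hqv, hbq, _⟩ := hq
  rcases hbq with h | ⟨h, h'⟩
  swap
  · exact ⟨le_of_eq h.symm, h'⟩
  refine ⟨le_of_lt h, ?_⟩
  by_contra hcon
  push_neg at hcon
  have hqS : q ∈ totalShape k m a g := (hI.filled_mem hqv).1
  have hbS : z.box ∈ totalShape k m a g := hI.hbox
  have hbS' : (z.box.1, z.box.2) ∈ totalShape k m a g := by
    rw [Prod.mk.eta]; exact hbS
  have hqS' : (q.1, q.2) ∈ totalShape k m a g := by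
    rw [Prod.mk.eta]; exact hqS
  rcases Nat.lt_or_ge q.2 z.box.2 with hlt | hge
  · -- q strictly left of the box's column
    have hfill : ∀ r, q.1 ≤ r → r ≤ z.box.1 → ∃ v, z.T (r, q.2) = some v := by
      intro r hr hr'
      apply hI.filled_of_mem
      · exact mem_seg hqS' hbS' hr hr' le_rfl (le_of_lt hlt)
      · intro hh
        have := congrArg Prod.snd hh
        simp only at this
        omega
    obtain ⟨v0, hv0⟩ := hfill z.box.1 (le_of_lt h) le_rfl
    have hv0i : v0 ≤ i := hP.1 q.2 v0 hlt hv0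
    have hchain := col_chain hI.hcol (le_of_lt h) hfill
      (by rw [Prod.mk.eta]; exact hqv) hv0
    omega
  · -- q in the box's column
    have heq : q.2 = z.box.2 := le_antisymm hcon hge
    have hfill : ∀ r, q.1 ≤ r → r ≤ z.box.1 - 1 → ∃ v, z.T (r, z.box.2) = some v := by
      intro r hr hr'
      apply hI.filled_of_mem
      · exact mem_seg hqS' hbS' hr (by omega) (le_of_eq heq) le_rfl
      · intro hh
        have := congrArg Prod.fst hh
        simp only at this
        omega
    obtain ⟨w, hw⟩ := hfill (z.box.1 - 1) (by omega) le_rfl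
    have hwi : w < i := hP.2.2.1 (z.box.1 - 1) w (by omega) hw
    have hq' : z.T (q.1, z.box.2) = some i := by
      rw [← heq, Prod.mk.eta]; exact hqv
    have hchain := col_chain hI.hcol (show q.1 ≤ z.box.1 - 1 by omega) hfill hq' hw
    omega

end Aux4

section Aux5

lemma swap_box (z : PState) (q : Cell) (v : ℕ) : (swapState z q v).box = q := rfl

lemma swap_T_box {z : PState} {q : Cell} (v : ℕ) :
    (swapState z q v).T z.box = some v := by
  simp [swapState]

lemma swap_T_q {z : PState} {q : Cell} (v : ℕ) (hne : q ≠ z.box) :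
    (swapState z q v).T q = none := by
  simp [swapState, Function.update_of_ne hne]

lemma swap_T_other {z : PState} {q p : Cell} (v : ℕ) (h1 : p ≠ z.box) (h2 : p ≠ q) :
    (swapState z q v).T p = z.T p := by
  simp [swapState, Function.update_of_ne h1, Function.update_of_ne h2]

lemma swap_cases {z : PState} {q p : Cell} {i v : ℕ} (hne : q ≠ z.box)
    (hp : (swapState z q i).T p = some v) :
    (p = z.box ∧ v = i) ∨ (p ≠ z.box ∧ p ≠ q ∧ z.T p = some v) := by
  by_cases h1 : p = z.box
  · subst h1
    rw [swap_T_box] at hp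
    exact Or.inl ⟨rfl, (Option.some.inj hp).symm⟩
  · by_cases h2 : p = q
    · subst h2
      rw [swap_T_q _ hne] at hp
      exact nomatch hp
    · exact Or.inr ⟨h1, h2, by rwa [swap_T_other _ h1 h2] at hp⟩

lemma swap_shape {k m : ℕ} {a g : Partition k m} {z : PState} {q : Cell} {i : ℕ}
    (hI : InvC k m a g z) (hqv : z.T q = some i) :
    ∀ p, ((swapState z q i).T p).isSome ↔
      (p ∈ totalShape k m a g ∧ p ≠ (swapState z q i).box) := by
  have hne : q ≠ z.box := (hI.filled_mem hqv).2
  intro p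
  rw [swap_box]
  by_cases h1 : p = z.box
  · subst h1
    rw [swap_T_box]
    simp only [Option.isSome_some, true_iff]
    exact ⟨hI.hbox, fun h => hne h.symm⟩
  · by_cases h2 : p = q
    · subst h2
      rw [swap_T_q _ hne]
      simp
    · rw [swap_T_other _ h1 h2, hI.hshape p]
      exact ⟨fun hh => ⟨hh.1, h2⟩, fun hh => ⟨hh.1, h1⟩⟩

/-- The nearest `i` strictly below the box in its own column must be the
Phase 1 target `q`. -/
lemma below_i_eq_q {k m : ℕ} {a g : Partition k m} {i : ℕ} {z : PState} {q : Cell}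
    (h1 : 1 ≤ i) (hI : InvC k m a g z) (hBB : BoxBetween i z) (hq : Phase1Move i z q)
    {r : ℕ} (hr : z.box.1 < r) (hv : z.T (r, z.box.2) = some i) :
    (r, z.box.2) = q := by
  obtain ⟨hqv, hqb, hnear⟩ := hq
  obtain ⟨hd1, hd2⟩ := claim1 h1 hI hBB ⟨hqv, hqb, hnear⟩
  have hsS : (r, z.box.2) ∈ totalShape k m a g := (hI.filled_mem hv).1
  have hbS' : (z.box.1, z.box.2) ∈ totalShape k m a g := by
    rw [Prod.mk.eta]; exact hI.hbox
  have hfill : ∀ r', z.box.1 + 1 ≤ r' → r' ≤ r → ∃ v, z.T (r', z.box.2) = some v := by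
    intro r' h' h''
    apply hI.filled_of_mem
    · exact mem_seg hbS' hsS (by omega) h'' le_rfl le_rfl
    · intro hh
      have := congrArg Prod.fst hh
      simp only at this
      omega
  obtain ⟨w, hw⟩ := hfill (z.box.1 + 1) le_rfl hr
  have hwi : i ≤ w := hBB.2.2.2 (z.box.1 + 1) w (by omega) hw
  have hchain := col_chain hI.hcol hr hfill hw hv
  have hreq : r = z.box.1 + 1 := by omega
  subst hreq
  have hprior : readBefore (z.box.1 + 1, z.box.2) z.box := Or.inl (by omega)
  rcases hnear _ hv hprior with h | h
  · exact h
  · exfalso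
    have h' : q.1 < z.box.1 + 1 ∨ (z.box.1 + 1 = q.1 ∧ z.box.2 < q.2) := h
    omega

/-- Preservation of the invariant along a Phase 1 move. -/
lemma p1_preserve {k m : ℕ} {a g : Partition k m} {i : ℕ} {z : PState} {q : Cell}
    (h1 : 1 ≤ i) (hI : InvC k m a g z) (hP : Phase1Inv k m i z)
    (hq : Phase1Move i z q) :
    InvC k m a g (swapState z q i) ∧ Phase1Inv k m (i + 1) (swapState z q i) := by
  have hBB := hP.1
  obtain ⟨hd1, hd2⟩ := claim1 h1 hI hBB hq
  obtain ⟨hqv, hqb, hnear⟩ := hq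
  have hqS : q ∈ totalShape k m a g := (hI.filled_mem hqv).1
  have hne : q ≠ z.box := (hI.filled_mem hqv).2
  have hbnone : z.T z.box = none := hI.box_none
  have hbS : z.box ∈ totalShape k m a g := hI.hbox
  have hbrect := mem_rect hbS
  have hqrect := mem_rect hqS
  have hTeq : (swapState z q i).T =
      Function.update (Function.update z.T q none) z.box (some i) := rfl
  have hIC : InvC k m a g (swapState z q i) := by
    refine ⟨?_, swap_shape hI hqv, ?_, ?_, ?_, ?_⟩
    · rw [swap_box]; exact hqS
    · -- rows weakly increasing
      intro r c1 c2 v1 v2 hle hv1 hv2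
      rcases swap_cases hne hv1 with ⟨hb1, hv1'⟩ | ⟨hb1, hq1, hv1'⟩ <;>
        rcases swap_cases hne hv2 with ⟨hb2, hv2'⟩ | ⟨hb2, hq2, hv2'⟩
      · have e1 := congrArg Prod.snd hb1
        have e2 := congrArg Prod.snd hb2
        simp only at e1 e2
        omega
      · -- first is box, second old
        have e1 := congrArg Prod.fst hb1
        have e2 := congrArg Prod.snd hb1
        simp only at e1 e2
        have hc2 : z.box.2 < c2 := by
          rcases Nat.lt_or_ge z.box.2 c2 with h | h
          · exact h
          · exfalso
            exact hb2 (Prod.ext_iff.2 ⟨e1, by omega⟩)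
        rw [e1] at hv2'
        have := hBB.2.1 c2 v2 hc2 hv2'
        omega
      · -- first old, second box
        have e1 := congrArg Prod.fst hb2
        have e2 := congrArg Prod.snd hb2
        simp only at e1 e2
        have hc1 : c1 < z.box.2 := by
          rcases Nat.lt_or_ge c1 z.box.2 with h | h
          · exact h
          · exfalso
            exact hb1 (Prod.ext_iff.2 ⟨e1, by omega⟩)
        rw [e1] at hv1'
        have := hBB.1 c1 v1 hc1 hv1'
        omega
      · exact hI.hrow r c1 c2 v1 v2 hle hv1' hv2'
    · -- columns strictly increasing
      intro r1 r2 c v1 v2 hlt hv1 hv2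
      rcases swap_cases hne hv1 with ⟨hb1, hv1'⟩ | ⟨hb1, hq1, hv1'⟩ <;>
        rcases swap_cases hne hv2 with ⟨hb2, hv2'⟩ | ⟨hb2, hq2, hv2'⟩
      · have e1 := congrArg Prod.fst hb1
        have e2 := congrArg Prod.fst hb2
        simp only at e1 e2
        omega
      · -- first is box, second old, below
        have e1 := congrArg Prod.fst hb1
        have e2 := congrArg Prod.snd hb1
        simp only at e1 e2
        rw [e2] at hv2'
        have hge := hBB.2.2.2 r2 v2 (by omega) hv2'
        rcases Nat.lt_or_ge i v2 with h | h
        · omega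
        · exfalso
          have hvi : v2 = i := by omega
          rw [hvi] at hv2'
          have := below_i_eq_q h1 hI hBB ⟨hqv, hqb, hnear⟩ (by omega) hv2'
          rw [← e2] at this
          exact hq2 this
      · -- first old, second box
        have e1 := congrArg Prod.fst hb2
        have e2 := congrArg Prod.snd hb2
        simp only at e1 e2
        rw [e2] at hv1'
        have := hBB.2.2.1 r1 v1 (by omega) hv1'
        omega
      · exact hI.hcol r1 r2 c v1 v2 hlt hv1' hv2'
    · -- positive entries
      intro p v hv
      rcases swap_cases hne hv with ⟨_, hv'⟩ | ⟨_, _, hv'⟩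
      · omega
      · exact hI.hpos p v hv'
    · -- ballotness
      intro c j hj
      have E := cnt_swap_eq hbnone hqv hbrect.1 hbrect.2 hqrect.1 hqrect.2
        (fun s => readBefore c s)
      rw [hTeq]
      by_cases hji : j = i
      · rw [hji]
        rw [cnt_swap_ne hbnone hqv (show i + 1 ≠ i by omega)]
        have hBal := hI.hballot c i h1
        by_cases hPq : readBefore c q <;> by_cases hPb : readBefore c z.box
        · rw [if_pos hPq, if_pos hPb] at E
          omega
        · exact absurd (rb_trans hPq hqb) hPb
        · rw [if_neg hPq, if_pos hPb] at E
          omega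
        · rw [if_neg hPq, if_neg hPb] at E
          omega
      · by_cases hj1i : j + 1 = i
        · -- the interesting level: (i-1, i)
          have hi2 : 2 ≤ i := by omega
          rw [hj1i]
          rw [cnt_swap_ne hbnone hqv (show j ≠ i by omega)]
          have hBal := hI.hballot c j hj
          rw [hj1i] at hBal
          by_cases hPb : readBefore c z.box
          · by_cases hPq : readBefore c q
            · rw [if_pos hPq, if_pos hPb] at E
              omega
            · rw [if_neg hPq, if_pos hPb] at E
              have hK := hP.2 hi2
              have hiq : i - 1 = j := by omega
              rw [hiq] at hK
              have heq1 : countP k m z.T (fun s => readBefore c s) i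
                  = countP k m z.T (fun s => readBefore z.box s) i := by
                apply cnt_congr
                intro p _ _ hv
                constructor
                · intro hcp
                  rcases rb_total z.box p with h | h | h
                  · exact h
                  · exfalso
                    rw [← h, hbnone] at hv
                    exact nomatch hv
                  · exfalso
                    rcases hnear p hv h with rfl | h'
                    · exact hPq hcp
                    · rcases rb_total c q with hh | hh | hh
                      · exact hPq hh
                      · exact rb_asymm h' (hh ▸ hcp)
                      · exact rb_asymm h' (rb_trans hh hcp)
                · intro hbp
                  exact rb_trans hPb hbp
              have hle1 : countP k m z.T (fun s => readBefore z.box s) j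
                  ≤ countP k m z.T (fun s => readBefore c s) j := by
                apply cnt_mono
                intro p _ _ _ hp
                exact rb_trans hPb hp
              omega
          · by_cases hPq : readBefore c q
            · exact absurd (rb_trans hPq hqb) hPb
            · rw [if_neg hPq, if_neg hPb] at E
              omega
        · rw [cnt_swap_ne hbnone hqv (show j + 1 ≠ i by omega),
            cnt_swap_ne hbnone hqv (show j ≠ i by omega)]
          exact hI.hballot c j hj
  refine ⟨hIC, ?_, ?_⟩
  · -- BoxBetween (i+1) at the new box q
    refine ⟨?_, ?_, ?_, ?_⟩ <;> rw [swap_box] <;> intro t v ht hv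
    · -- left of q
      rcases swap_cases hne hv with ⟨hb, hv'⟩ | ⟨hb, hqc, hv'⟩
      · exfalso
        have := congrArg Prod.fst hb
        simp only at this
        omega
      · have := hI.hrow q.1 t q.2 v i (le_of_lt ht) hv' (by rw [Prod.mk.eta]; exact hqv)
        omega
    · -- right of q
      rcases swap_cases hne hv with ⟨hb, hv'⟩ | ⟨hb, hqc, hv'⟩
      · exfalso
        have := congrArg Prod.fst hb
        simp only at this
        omega
      · have hge := hI.hrow q.1 q.2 t i v (le_of_lt ht)
          (by rw [Prod.mk.eta]; exact hqv) hv'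
        rcases Nat.lt_or_ge i v with h | h
        · omega
        · exfalso
          have hvi : v = i := by omega
          rw [hvi] at hv'
          have hprior : readBefore (q.1, t) z.box := Or.inl (by omega)
          rcases hnear _ hv' hprior with h' | h'
          · have := congrArg Prod.snd h'
            simp only at this
            omega
          · have h'' : q.1 < q.1 ∨ (q.1 = q.1 ∧ t < q.2) := h'
            omega
    · -- above q
      rcases swap_cases hne hv with ⟨hb, hv'⟩ | ⟨hb, hqc, hv'⟩
      · omega
      · have := hI.hcol t q.1 q.2 v i ht hv' (by rw [Prod.mk.eta]; exact hqv)
        omega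
    · -- below q
      rcases swap_cases hne hv with ⟨hb, hv'⟩ | ⟨hb, hqc, hv'⟩
      · exfalso
        have := congrArg Prod.fst hb
        simp only at this
        omega
      · have := hI.hcol q.1 t q.2 i v ht (by rw [Prod.mk.eta]; exact hqv) hv'
        omega
  · -- the counting invariant at level i+1
    intro _
    rw [swap_box]
    have E := cnt_swap_eq hbnone hqv hbrect.1 hbrect.2 hqrect.1 hqrect.2
      (fun s => readBefore q s)
    rw [if_neg (rb_irrefl q), if_pos hqb] at E
    rw [hTeq]
    have hiu : i + 1 - 1 = i := by omega
    rw [hiu]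
    rw [cnt_swap_ne hbnone hqv (show i + 1 ≠ i by omega)]
    have := hI.hballot q i h1
    omega

end Aux5

section Aux6

/-- Entering Phase 2: the Phase 1 invariant upgrades. -/
lemma p1to2_preserve {i : ℕ} {z : PState}
    (h1 : 1 ≤ i) (hP : BoxBetween i z) (hnc : ¬ phase1Cond i z) :
    Phase2Inv i z := by
  refine ⟨?_, hP.2.1, ?_, ?_⟩
  · intro c v hc hv
    have := hP.1 c v hc hv
    omega
  · intro r v hr hv
    have := hP.2.2.1 r v hr hv
    omega
  · intro r v hr hv
    have hge := hP.2.2.2 r v hr hv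
    rcases Nat.lt_or_ge i v with h | h
    · omega
    · exfalso
      have hvi : v = i := by omega
      rw [hvi] at hv
      exact hnc ⟨(r, z.box.2), hv, Or.inl hr⟩

/-- Preservation of the invariant along a Phase 2 move. -/
lemma p2_preserve {k m : ℕ} {a g : Partition k m} {i : ℕ} {z : PState} {q : Cell}
    (h1 : 1 ≤ i) (hI : InvC k m a g z) (hP : Phase2Inv i z)
    (hc : phase2Cond k m i z) (hq : Phase2Move i z q) :
    InvC k m a g (swapState z q i) ∧ Phase2Inv i (swapState z q i) := by
  obtain ⟨hu1, hu2⟩ := claim2 hI hP hq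
  obtain ⟨hqv, hqb, hnear⟩ := hq
  have hqS : q ∈ totalShape k m a g := (hI.filled_mem hqv).1
  have hne : q ≠ z.box := (hI.filled_mem hqv).2
  have hbnone : z.T z.box = none := hI.box_none
  have hbS : z.box ∈ totalShape k m a g := hI.hbox
  have hbrect := mem_rect hbS
  have hqrect := mem_rect hqS
  have hTeq : (swapState z q i).T =
      Function.update (Function.update z.T q none) z.box (some i) := rfl
  have hIC : InvC k m a g (swapState z q i) := by
    refine ⟨?_, swap_shape hI hqv, ?_, ?_, ?_, ?_⟩
    · rw [swap_box]; exact hqS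
    · -- rows weakly increasing
      intro r c1 c2 v1 v2 hle hv1 hv2
      rcases swap_cases hne hv1 with ⟨hb1, hv1'⟩ | ⟨hb1, hq1, hv1'⟩ <;>
        rcases swap_cases hne hv2 with ⟨hb2, hv2'⟩ | ⟨hb2, hq2, hv2'⟩
      · have e1 := congrArg Prod.snd hb1
        have e2 := congrArg Prod.snd hb2
        simp only at e1 e2
        omega
      · have e1 := congrArg Prod.fst hb1
        have e2 := congrArg Prod.snd hb1
        simp only at e1 e2
        have hc2 : z.box.2 < c2 := by
          rcases Nat.lt_or_ge z.box.2 c2 with h | h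
          · exact h
          · exfalso
            exact hb2 (Prod.ext_iff.2 ⟨e1, by omega⟩)
        rw [e1] at hv2'
        have := hP.2.1 c2 v2 hc2 hv2'
        omega
      · have e1 := congrArg Prod.fst hb2
        have e2 := congrArg Prod.snd hb2
        simp only at e1 e2
        have hc1 : c1 < z.box.2 := by
          rcases Nat.lt_or_ge c1 z.box.2 with h | h
          · exact h
          · exfalso
            exact hb1 (Prod.ext_iff.2 ⟨e1, by omega⟩)
        rw [e1] at hv1'
        have := hP.1 c1 v1 hc1 hv1'
        omega
      · exact hI.hrow r c1 c2 v1 v2 hle hv1' hv2'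
    · -- columns strictly increasing
      intro r1 r2 c v1 v2 hlt hv1 hv2
      rcases swap_cases hne hv1 with ⟨hb1, hv1'⟩ | ⟨hb1, hq1, hv1'⟩ <;>
        rcases swap_cases hne hv2 with ⟨hb2, hv2'⟩ | ⟨hb2, hq2, hv2'⟩
      · have e1 := congrArg Prod.fst hb1
        have e2 := congrArg Prod.fst hb2
        simp only at e1 e2
        omega
      · have e1 := congrArg Prod.fst hb1
        have e2 := congrArg Prod.snd hb1
        simp only at e1 e2
        rw [e2] at hv2'
        have := hP.2.2.2 r2 v2 (by omega) hv2'
        omega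
      · have e1 := congrArg Prod.fst hb2
        have e2 := congrArg Prod.snd hb2
        simp only at e1 e2
        rw [e2] at hv1'
        have := hP.2.2.1 r1 v1 (by omega) hv1'
        omega
      · exact hI.hcol r1 r2 c v1 v2 hlt hv1' hv2'
    · intro p v hv
      rcases swap_cases hne hv with ⟨_, hv'⟩ | ⟨_, _, hv'⟩
      · omega
      · exact hI.hpos p v hv'
    · -- ballotness
      intro c j hj
      have E := cnt_swap_eq hbnone hqv hbrect.1 hbrect.2 hqrect.1 hqrect.2
        (fun s => readBefore c s)
      rw [hTeq]
      by_cases hji : j = i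
      · rw [hji]
        rw [cnt_swap_ne hbnone hqv (show i + 1 ≠ i by omega)]
        have hBal := hI.hballot c i h1
        by_cases hPq : readBefore c q <;> by_cases hPb : readBefore c z.box
        · rw [if_pos hPq, if_pos hPb] at E
          omega
        · -- c lies (weakly) after the box and before q
          rw [if_pos hPq, if_neg hPb] at E
          have heqi : countP k m z.T (fun s => readBefore c s) i
              = countP k m z.T (fun s => readBefore z.box s) i := by
            apply cnt_congr
            intro p _ _ hv
            constructor
            · intro hcp
              rcases rb_total z.box c with h | h | h
              · exact rb_trans h hcp
              · exact h ▸ hcp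
              · exact absurd h hPb
            · intro hbp
              rcases hnear p hv hbp with rfl | h'
              · exact hPq
              · exact rb_trans hPq h'
          have hmono1 : countP k m z.T (fun s => readBefore c s) (i+1)
              ≤ countP k m z.T (fun s => readBefore z.box s) (i+1) := by
            apply cnt_mono
            intro p _ _ _ hp
            rcases rb_total z.box c with h | h | h
            · exact rb_trans h hp
            · exact h ▸ hp
            · exact absurd h hPb
          have hpc : countP k m z.T (fun s => readBefore z.box s) (i+1)
              < countP k m z.T (fun s => readBefore z.box s) i := hc
          omega
        · exact absurd (rb_trans hPb hqb) hPq
        · rw [if_neg hPq, if_neg hPb] at E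
          omega
      · by_cases hj1i : j + 1 = i
        · rw [hj1i]
          rw [cnt_swap_ne hbnone hqv (show j ≠ i by omega)]
          have hBal := hI.hballot c j hj
          rw [hj1i] at hBal
          by_cases hPq : readBefore c q <;> by_cases hPb : readBefore c z.box
          · rw [if_pos hPq, if_pos hPb] at E
            omega
          · rw [if_pos hPq, if_neg hPb] at E
            omega
          · exact absurd (rb_trans hPb hqb) hPq
          · rw [if_neg hPq, if_neg hPb] at E
            omega
        · rw [cnt_swap_ne hbnone hqv (show j + 1 ≠ i by omega),
            cnt_swap_ne hbnone hqv (show j ≠ i by omega)]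
          exact hI.hballot c j hj
  refine ⟨hIC, ?_, ?_, ?_, ?_⟩ <;> rw [swap_box] <;> intro t v ht hv
  · -- left of q
    rcases swap_cases hne hv with ⟨hb, hv'⟩ | ⟨hb, hqc, hv'⟩
    · omega
    · have := hI.hrow q.1 t q.2 v i (le_of_lt ht) hv' (by rw [Prod.mk.eta]; exact hqv)
      omega
  · -- right of q
    rcases swap_cases hne hv with ⟨hb, hv'⟩ | ⟨hb, hqc, hv'⟩
    · exfalso
      have e2 := congrArg Prod.snd hb
      simp only at e2
      omega
    · have := hI.hrow q.1 q.2 t i v (le_of_lt ht) (by rw [Prod.mk.eta]; exact hqv) hv'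
      omega
  · -- above q
    rcases swap_cases hne hv with ⟨hb, hv'⟩ | ⟨hb, hqc, hv'⟩
    · exfalso
      have e1 := congrArg Prod.fst hb
      simp only at e1
      omega
    · have := hI.hcol t q.1 q.2 v i ht hv' (by rw [Prod.mk.eta]; exact hqv)
      omega
  · -- below q
    rcases swap_cases hne hv with ⟨hb, hv'⟩ | ⟨hb, hqc, hv'⟩
    · exfalso
      have e2 := congrArg Prod.snd hb
      simp only at e2
      omega
    · have := hI.hcol q.1 t q.2 i v ht (by rw [Prod.mk.eta]; exact hqv) hv'
      omega

end Aux6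

section Aux7

/-- At the end of the Phase 2 loop at value `i`, there is no `i` to the right
of the box in its row. -/
lemma no_i_right {k m : ℕ} {a g : Partition k m} {i : ℕ} {z : PState}
    (h1 : 1 ≤ i) (hI : InvC k m a g z) (hnc : ¬ phase2Cond k m i z)
    {t : ℕ} (ht : z.box.2 < t) (hv : z.T (z.box.1, t) = some i) : False := by
  have hsrect := mem_rect (hI.filled_mem hv).1
  have hsk : z.box.1 < k := hsrect.1
  have hsm : t < m := hsrect.2
  have hbs : readBefore z.box (z.box.1, t) := Or.inr ⟨rfl, ht⟩
  have hAlpha : countP k m z.T (fun p => readBefore z.box p) (i+1)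
      = countP k m z.T (fun p => readBefore (z.box.1, t) p) (i+1) := by
    apply cnt_congr
    intro p _ _ hpv
    constructor
    · intro hbp
      rcases rb_total (z.box.1, t) p with h | h | h
      · exact h
      · exfalso
        rw [← h, hv] at hpv
        exact absurd (Option.some.inj hpv) (by omega)
      · exfalso
        have h2 : z.box.1 < p.1 ∨ (p.1 = z.box.1 ∧ p.2 < t) := h
        have hb2 : p.1 < z.box.1 ∨ (z.box.1 = p.1 ∧ z.box.2 < p.2) := hbp
        rcases hb2 with hb2 | ⟨hb2, hb2'⟩
        · rcases h2 with h2 | ⟨h2, _⟩ <;> omega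
        · rcases h2 with h2 | ⟨h2, h2'⟩
          · omega
          · have hpp : (z.box.1, p.2) = p := Prod.ext_iff.2 ⟨hb2, rfl⟩
            have hpv' : z.T (z.box.1, p.2) = some (i+1) := by rw [hpp]; exact hpv
            have := hI.hrow z.box.1 p.2 t (i+1) i (le_of_lt h2') hpv' hv
            omega
    · intro hsp
      exact rb_trans hbs hsp
  have hBeta := cnt_lt (s := ((z.box.1, t) : Cell))
    (P := fun p => readBefore (z.box.1, t) p)
    (Q := fun p => readBefore z.box p) hsk hsm hv hbs (rb_irrefl _)
    (fun p _ _ _ hp => rb_trans hbs hp)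
  have hBal := hI.hballot (z.box.1, t) i h1
  simp only [phase2Cond, not_lt] at hnc
  omega

/-- At the end of the Phase 2 loop at value `i`, there is no `i+1` strictly
below the box in its column. -/
lemma no_below {k m : ℕ} {a g : Partition k m} {i : ℕ} {z : PState}
    (h1 : 1 ≤ i) (hI : InvC k m a g z) (hP : Phase2Inv i z)
    (hnc : ¬ phase2Cond k m i z)
    {r : ℕ} (hr : z.box.1 < r) (hv : z.T (r, z.box.2) = some (i+1)) : False := by
  classical
  have hbS' : (z.box.1, z.box.2) ∈ totalShape k m a g := by
    rw [Prod.mk.eta]; exact hI.hbox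
  have hrS : (r, z.box.2) ∈ totalShape k m a g := (hI.filled_mem hv).1
  have hbnone := hI.box_none
  -- Step 0: the cell directly below the box carries `i+1`.
  have hs : z.T (z.box.1 + 1, z.box.2) = some (i + 1) := by
    have hfill : ∀ r', z.box.1 + 1 ≤ r' → r' ≤ r → ∃ v, z.T (r', z.box.2) = some v := by
      intro r' h' h''
      apply hI.filled_of_mem
      · exact mem_seg hbS' hrS (by omega) h'' le_rfl le_rfl
      · intro hh
        have := congrArg Prod.fst hh
        simp only at this
        omega
    obtain ⟨w, hw⟩ := hfill (z.box.1 + 1) le_rfl hr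
    have hwge : i + 1 ≤ w := hP.2.2.2 (z.box.1 + 1) w (by omega) hw
    have hchain := col_chain hI.hcol hr hfill hw hv
    have heq : r = z.box.1 + 1 := by omega
    rw [heq] at hv
    exact hv
  have hsS : (z.box.1 + 1, z.box.2) ∈ totalShape k m a g := (hI.filled_mem hs).1
  have hsrect := mem_rect hsS
  have hsk : z.box.1 + 1 < k := hsrect.1
  have hsm : z.box.2 < m := hsrect.2
  have hNc : countP k m z.T (fun p => readBefore z.box p) i
      ≤ countP k m z.T (fun p => readBefore z.box p) (i+1) := by
    simp only [phase2Cond, not_lt] at hnc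
    exact hnc
  -- upper bound for counts of `i` in inclusive suffixes from row z.box.1+1
  have hUpper : ∀ c0 : ℕ, c0 ≤ z.box.2 → z.T (z.box.1 + 1, c0) = some (i+1) →
      countP k m z.T (atOrAfter (z.box.1 + 1, c0)) i
        ≤ countP k m z.T (fun p => p.1 = z.box.1 ∧ p.2 < z.box.2) i
          + countP k m z.T (fun p => readBefore z.box p) i := by
    intro c0 hc0 hvc0
    refine le_trans (cnt_mono ?_) cnt_or_le
    intro p _ _ hpv hp
    rcases hp with hp | hp
    · exfalso
      rw [hp, hvc0] at hpv
      exact absurd (Option.some.inj hpv) (by omega)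
    · have hp2 : p.1 < z.box.1 + 1 ∨ (z.box.1 + 1 = p.1 ∧ c0 < p.2) := hp
      rcases hp2 with h | ⟨h, h'⟩
      · rcases Nat.lt_or_ge p.1 z.box.1 with hh | hh
        · exact Or.inr (Or.inl hh)
        · have hp1 : p.1 = z.box.1 := by omega
          rcases Nat.lt_trichotomy p.2 z.box.2 with h2 | h2 | h2
          · exact Or.inl ⟨hp1, h2⟩
          · exfalso
            have hpb : p = z.box := Prod.ext_iff.2 ⟨hp1, h2⟩
            rw [hpb, hbnone] at hpv
            exact nomatch hpv
          · exact Or.inr (Or.inr ⟨hp1.symm, h2⟩)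
      · exfalso
        have hpp : (z.box.1 + 1, p.2) = p := Prod.ext_iff.2 ⟨h, rfl⟩
        have hpv' : z.T (z.box.1 + 1, p.2) = some i := by rw [hpp]; exact hpv
        have := hI.hrow (z.box.1 + 1) c0 p.2 (i+1) i (le_of_lt h') hvc0 hpv'
        omega
  -- Step 1 : some `i` lies in the box's row, left of the box.
  have hstep1 : 1 ≤ countP k m z.T (fun p => p.1 = z.box.1 ∧ p.2 < z.box.2) i := by
    have hA := cnt_lt (s := ((z.box.1 + 1, z.box.2) : Cell))
      (P := fun p => readBefore z.box p)
      (Q := atOrAfter (z.box.1 + 1, z.box.2)) hsk hsm hs (Or.inl rfl)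
      (fun hh => by
        have h2 : z.box.1 + 1 < z.box.1
            ∨ (z.box.1 = z.box.1 + 1 ∧ z.box.2 < z.box.2) := hh
        rcases h2 with h2 | ⟨h2, _⟩ <;> omega)
      (fun p _ _ _ hp => Or.inr (by
        have h2 : p.1 < z.box.1 ∨ (z.box.1 = p.1 ∧ z.box.2 < p.2) := hp
        exact Or.inl (by rcases h2 with h2 | ⟨h2, _⟩ <;> omega)))
    have hB := hUpper z.box.2 le_rfl hs
    have hC := ballotX_incl hI.hballot (z.box.1 + 1, z.box.2) h1
    omega
  -- Step 2 : take the leftmost such `i`, sitting at column `cl`.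
  have hex : ∃ c, c < z.box.2 ∧ z.T (z.box.1, c) = some i := by
    rw [countP_eq_card] at hstep1
    have hpos : 0 < (cset k m z.T (fun p => p.1 = z.box.1 ∧ p.2 < z.box.2) i).card := by
      omega
    obtain ⟨p, hp⟩ := Finset.card_pos.1 hpos
    rw [mem_cset] at hp
    obtain ⟨hrect, hPLp, hpv⟩ := hp
    refine ⟨p.2, hPLp.2, ?_⟩
    have hpp : (z.box.1, p.2) = p := Prod.ext_iff.2 ⟨hPLp.1.symm, rfl⟩
    rw [hpp]
    exact hpv
  obtain ⟨hcl1, hcl2⟩ := Nat.find_spec hex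
  have hmin : ∀ c', c' < Nat.find hex → ¬ (c' < z.box.2 ∧ z.T (z.box.1, c') = some i) :=
    fun c' h => Nat.find_min hex h
  -- below every such `i` there is an `i+1`
  have hbelow : ∀ c', c' < z.box.2 → z.T (z.box.1, c') = some i →
      z.T (z.box.1 + 1, c') = some (i+1) := by
    intro c' hc' hvc'
    have hcS : (z.box.1, c') ∈ totalShape k m a g := (hI.filled_mem hvc').1
    have htS : (z.box.1 + 1, c') ∈ totalShape k m a g :=
      mem_seg hcS hsS (by omega) le_rfl le_rfl (le_of_lt hc')
    obtain ⟨w, hw⟩ := hI.filled_of_mem htS (fun hh => by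
      have := congrArg Prod.fst hh
      simp only at this
      omega)
    have h1w : i < w := hI.hcol z.box.1 (z.box.1+1) c' i w (by omega) hvc' hw
    have h2w : w ≤ i + 1 := hI.hrow (z.box.1+1) c' z.box.2 w (i+1) (le_of_lt hc') hw hs
    have hweq : w = i + 1 := by omega
    rw [hweq] at hw
    exact hw
  -- Step 3 : the big counting contradiction at the inclusive suffix from
  -- (z.box.1 + 1, cl).
  set cl := Nat.find hex with hcldef
  have hA2 : countP k m z.T (fun p => p.1 = z.box.1 ∧ p.2 < z.box.2) i + 1
      + countP k m z.T (fun p => readBefore z.box p) (i+1)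
      ≤ countP k m z.T (atOrAfter (z.box.1 + 1, cl)) (i+1) := by
    classical
    set F := cset k m z.T (fun p => p.1 = z.box.1 ∧ p.2 < z.box.2) i with hF
    set A := F.image (fun p => ((z.box.1 + 1 : ℕ), p.2)) with hA
    set C := cset k m z.T (fun p => readBefore z.box p) (i+1) with hC
    have hcardA : A.card = F.card := by
      rw [hA]
      apply Finset.card_image_of_injOn
      intro p hp p' hp' heq
      rw [Finset.mem_coe, hF, mem_cset] at hp hp'
      have e2 := congrArg Prod.snd heq
      simp only at e2
      exact Prod.ext_iff.2 ⟨hp.2.1.1.trans hp'.2.1.1.symm, e2⟩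
    have hsnC : ((z.box.1 + 1 : ℕ), z.box.2) ∉ C := by
      rw [hC, mem_cset]
      rintro ⟨-, hrb, -⟩
      have h2 : z.box.1 + 1 < z.box.1
          ∨ (z.box.1 = z.box.1 + 1 ∧ z.box.2 < z.box.2) := hrb
      rcases h2 with h2 | ⟨h2, _⟩ <;> omega
    have hsub : A ∪ insert ((z.box.1 + 1 : ℕ), z.box.2) C
        ⊆ cset k m z.T (atOrAfter (z.box.1 + 1, cl)) (i+1) := by
      intro x hx
      rcases Finset.mem_union.1 hx with hx | hx
      · rw [hA] at hx
        obtain ⟨p, hp, rfl⟩ := Finset.mem_image.1 hx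
        rw [hF, mem_cset] at hp
        obtain ⟨hrect, ⟨hp1, hp2⟩, hpv⟩ := hp
        have hvp : z.T (z.box.1, p.2) = some i := by
          rw [Prod.ext_iff.2 (⟨hp1.symm, rfl⟩ : ((z.box.1 : ℕ), p.2).1 = p.1 ∧ _)]
          exact hpv
        have hclle : cl ≤ p.2 := by
          by_contra hcc
          exact hmin p.2 (by omega) ⟨hp2, hvp⟩
        rw [mem_cset]
        refine ⟨⟨hsk, hrect.2⟩, ?_, hbelow p.2 hp2 hvp⟩
        rcases Nat.eq_or_lt_of_le hclle with hcc | hcc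
        · exact Or.inl (Prod.ext_iff.2 ⟨rfl, hcc.symm⟩)
        · exact Or.inr (Or.inr ⟨rfl, hcc⟩)
      · rcases Finset.mem_insert.1 hx with rfl | hx
        · rw [mem_cset]
          exact ⟨⟨hsk, hsm⟩, Or.inr (Or.inr ⟨rfl, hcl1⟩), hs⟩
        · rw [hC, mem_cset] at hx
          obtain ⟨hrect, hrb, hpv⟩ := hx
          rw [mem_cset]
          refine ⟨hrect, Or.inr ?_, hpv⟩
          have h2 : x.1 < z.box.1 ∨ (z.box.1 = x.1 ∧ z.box.2 < x.2) := hrb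
          exact Or.inl (by rcases h2 with h2 | ⟨h2, _⟩ <;> omega)
    have hdisj : Disjoint A (insert ((z.box.1 + 1 : ℕ), z.box.2) C) := by
      rw [Finset.disjoint_left]
      intro x hxA hxB
      rw [hA] at hxA
      obtain ⟨p, hp, rfl⟩ := Finset.mem_image.1 hxA
      rw [hF, mem_cset] at hp
      obtain ⟨hrect, ⟨hp1, hp2⟩, hpv⟩ := hp
      rcases Finset.mem_insert.1 hxB with heq | hxB
      · have := congrArg Prod.snd heq
        simp only at this
        omega
      · rw [hC, mem_cset] at hxB
        obtain ⟨-, hrb, -⟩ := hxB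
        have h2 : z.box.1 + 1 < z.box.1
            ∨ (z.box.1 = z.box.1 + 1 ∧ z.box.2 < p.2) := hrb
        rcases h2 with h2 | ⟨h2, _⟩ <;> omega
    calc countP k m z.T (fun p => p.1 = z.box.1 ∧ p.2 < z.box.2) i + 1
          + countP k m z.T (fun p => readBefore z.box p) (i+1)
        = F.card + (insert ((z.box.1 + 1 : ℕ), z.box.2) C).card := by
          rw [countP_eq_card, countP_eq_card, ← hF, ← hC,
            Finset.card_insert_of_notMem hsnC]
          omega
      _ = A.card + (insert ((z.box.1 + 1 : ℕ), z.box.2) C).card := by rw [hcardA]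
      _ = (A ∪ insert ((z.box.1 + 1 : ℕ), z.box.2) C).card :=
          (Finset.card_union_of_disjoint hdisj).symm
      _ ≤ _ := by
          rw [countP_eq_card]
          exact Finset.card_le_card hsub
  have hB2 := hUpper cl (le_of_lt hcl1) (hbelow cl hcl1 hcl2)
  have hC2 := ballotX_incl hI.hballot (z.box.1 + 1, cl) h1
  omega

/-- Incrementing the value at the end of the Phase 2 loop preserves the
Phase 2 invariant. -/
lemma p2inc_preserve {k m : ℕ} {a g : Partition k m} {i : ℕ} {z : PState}
    (h1 : 1 ≤ i) (hI : InvC k m a g z) (hP : Phase2Inv i z)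
    (hnc : ¬ phase2Cond k m i z) :
    Phase2Inv (i + 1) z := by
  refine ⟨?_, ?_, ?_, ?_⟩
  · intro c v hc hv
    have := hP.1 c v hc hv
    omega
  · intro c v hc hv
    have hge := hP.2.1 c v hc hv
    rcases Nat.lt_or_ge i v with h | h
    · omega
    · exfalso
      have hvi : v = i := by omega
      rw [hvi] at hv
      exact no_i_right h1 hI hnc hc hv
  · intro r v hrr hv
    have := hP.2.2.1 r v hrr hv
    omega
  · intro r v hrr hv
    have hge := hP.2.2.2 r v hrr hv
    rcases Nat.lt_or_ge (i+1) v with h | h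
    · omega
    · exfalso
      have hvi : v = i + 1 := by omega
      rw [hvi] at hv
      exact no_below h1 hI hP hnc hrr hv

end Aux7

section Aux8

/-- The invariant at the start of the algorithm. -/
lemma inv_init {k m : ℕ} {a b g : Partition k m} {x : PState}
    (hx : MemLR1 k m a b g x) : Inv k m a g (1, false, x) := by
  obtain ⟨hbox, hshape, hrow, hcol, hpos, hballot, hcontent, hwest, hnorth⟩ := hx
  have hIC : InvC k m a g x :=
    ⟨hbox, hshape, hrow, hcol, hpos, ballotX_of_ballot hballot⟩
  have hbS' : (x.box.1, x.box.2) ∈ totalShape k m a g := by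
    rw [Prod.mk.eta]; exact hbox
  refine ⟨le_rfl, hIC, ?_⟩
  simp only [Inv]
  refine ⟨⟨?_, ?_, ?_, ?_⟩, ?_⟩
  · -- no cells to the left of the box
    intro c v hc hv
    exfalso
    have hcS : (x.box.1, c) ∈ totalShape k m a g := (hIC.filled_mem hv).1
    have hwS : (x.box.1, x.box.2 - 1) ∈ totalShape k m a g :=
      mem_seg hcS hbS' le_rfl le_rfl (by omega) (by omega)
    obtain ⟨w, hw⟩ := hIC.filled_of_mem hwS (by
      intro hh
      have := congrArg Prod.snd hh
      simp only at this
      omega)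
    exact hwest (by simp [shapeOf, hw])
  · intro c v _ hv
    have := hpos _ _ hv
    omega
  · -- no cells above the box
    intro r v hrr hv
    exfalso
    have hrS : (r, x.box.2) ∈ totalShape k m a g := (hIC.filled_mem hv).1
    have hnS : (x.box.1 - 1, x.box.2) ∈ totalShape k m a g :=
      mem_seg hrS hbS' (by omega) (by omega) le_rfl le_rfl
    obtain ⟨w, hw⟩ := hIC.filled_of_mem hnS (by
      intro hh
      have := congrArg Prod.fst hh
      simp only at this
      omega)
    exact hnorth (by simp [shapeOf, hw])
  · intro r v _ hv
    have := hpos _ _ hv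
    omega
  · intro h
    omega

lemma inv_false {k m : ℕ} {a g : Partition k m} {i : ℕ} {z : PState}
    (hI : Inv k m a g (i, false, z)) :
    1 ≤ i ∧ InvC k m a g z ∧ Phase1Inv k m i z := by
  simpa [Inv] using hI

lemma inv_true {k m : ℕ} {a g : Partition k m} {i : ℕ} {z : PState}
    (hI : Inv k m a g (i, true, z)) :
    1 ≤ i ∧ InvC k m a g z ∧ Phase2Inv i z := by
  simpa [Inv] using hI

/-- The invariant is preserved by each step of the algorithm. -/
lemma inv_step {k m lb : ℕ} {a g : Partition k m} {st st' : ℕ × Bool × PState}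
    (h : Step k m lb st st') (hI : Inv k m a g st) : Inv k m a g st' := by
  cases h with
  | @p1 i x q hi hq =>
    obtain ⟨h1, hIC, hP⟩ := inv_false hI
    obtain ⟨hIC', hP'⟩ := p1_preserve h1 hIC hP hq
    exact ⟨by omega, hIC', by simpa [Inv] using hP'⟩
  | @p1to2 i x hi hnc =>
    obtain ⟨h1, hIC, hP⟩ := inv_false hI
    exact ⟨h1, hIC, by simpa [Inv] using p1to2_preserve h1 hP.1 hnc⟩
  | @p2 i x q hi hc hq =>
    obtain ⟨h1, hIC, hP⟩ := inv_true hI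
    obtain ⟨hIC', hP'⟩ := p2_preserve h1 hIC hP hc hq
    exact ⟨h1, hIC', by simpa [Inv] using hP'⟩
  | @p2inc i x hi hnc =>
    obtain ⟨h1, hIC, hP⟩ := inv_true hI
    exact ⟨by omega, hIC, by simpa [Inv] using p2inc_preserve h1 hIC hP hnc⟩

lemma inv_reach {k m lb : ℕ} {a g : Partition k m} {st st' : ℕ × Bool × PState}
    (hI : Inv k m a g st) (h : Relation.ReflTransGen (Step k m lb) st st') :
    Inv k m a g st' := by
  induction h with
  | refl => exact hI
  | tail _ hstep ih => exact inv_step hstep ih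

/-- Once in Phase 2, the algorithm never returns to Phase 1. -/
lemma rtg_true {k m lb : ℕ} {i : ℕ} {x : PState} {st' : ℕ × Bool × PState}
    (h : Relation.ReflTransGen (Step k m lb) (i, true, x) st') : st'.2.1 = true := by
  induction h with
  | refl => rfl
  | tail _ hstep ih =>
    cases hstep <;> simp_all

end Aux8

/-- Each Phase 1 move takes `⊠` strictly down and weakly
left, and the Phase 1 squares form a vertical strip; each Phase 2 move takes
`⊠` weakly up and strictly right, and the Phase 2 squares form a horizontal
strip. -/
theorem stmt_5 (k m : ℕ) (hk : 0 < k) (hm : 0 < m) (a b g : Partition k m)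
    (hsz : a.size + b.size + g.size = k * m - 1)
    (x : PState) (hx : MemLR1 k m a b g x) :
    (∀ (i : ℕ) (z w : PState),
      Relation.ReflTransGen (Step k m b.length) (1, false, x) (i, false, z) →
      Step k m b.length (i, false, z) (i + 1, false, w) →
      z.box.1 < w.box.1 ∧ w.box.2 ≤ z.box.2) ∧
    (∀ (i : ℕ) (z w : PState),
      Relation.ReflTransGen (Step k m b.length) (1, false, x) (i, true, z) →
      Step k m b.length (i, true, z) (i, true, w) →
      w.box.1 ≤ z.box.1 ∧ z.box.2 < w.box.2) ∧
    (∀ (i j : ℕ) (z w : PState),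
      Relation.ReflTransGen (Step k m b.length) (1, false, x) (i, false, z) →
      Relation.ReflTransGen (Step k m b.length) (i, false, z) (j, false, w) →
      z.box ≠ w.box → z.box.1 ≠ w.box.1) ∧
    (∀ (i j : ℕ) (z w : PState),
      Relation.ReflTransGen (Step k m b.length) (1, false, x) (i, true, z) →
      Relation.ReflTransGen (Step k m b.length) (i, true, z) (j, true, w) →
      z.box ≠ w.box → z.box.2 ≠ w.box.2) := by
  have hreach : ∀ st, Relation.ReflTransGen (Step k m b.length) (1, false, x) st →
      Inv k m a g st := fun st h => inv_reach (inv_init hx) h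
  -- the two single-move statements
  have part1 : ∀ (i : ℕ) (z w : PState),
      Relation.ReflTransGen (Step k m b.length) (1, false, x) (i, false, z) →
      Step k m b.length (i, false, z) (i + 1, false, w) →
      z.box.1 < w.box.1 ∧ w.box.2 ≤ z.box.2 := by
    intro i z w hz hstep
    obtain ⟨h1, hIC, hP⟩ := inv_false (hreach _ hz)
    cases hstep with
    | p1 hi hq => exact claim1 h1 hIC hP.1 hq
  have part2 : ∀ (i : ℕ) (z w : PState),
      Relation.ReflTransGen (Step k m b.length) (1, false, x) (i, true, z) →
      Step k m b.length (i, true, z) (i, true, w) →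
      w.box.1 ≤ z.box.1 ∧ z.box.2 < w.box.2 := by
    intro i z w hz hstep
    obtain ⟨h1, hIC, hP⟩ := inv_true (hreach _ hz)
    cases hstep with
    | p2 hi hc hq => exact claim2 hIC hP hq
  refine ⟨part1, part2, ?_, ?_⟩
  · -- Phase 1 squares form a vertical strip
    have key : ∀ (st : ℕ × Bool × PState) (j : ℕ) (w : PState)
        (h : Relation.ReflTransGen (Step k m b.length) st (j, false, w)),
        Relation.ReflTransGen (Step k m b.length) (1, false, x) st →
        st.2.1 = false →
        st.2.2.box = w.box ∨ st.2.2.box.1 < w.box.1 := by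
      intro st j w h
      induction h using Relation.ReflTransGen.head_induction_on with
      | refl => intro _ _; exact Or.inl rfl
      | head hstep hrest ih =>
        intro hst hfalse
        rename_i a' c'
        have hreach' : Relation.ReflTransGen (Step k m b.length) (1, false, x) c' :=
          hst.tail hstep
        cases hstep with
        | p1 hi hq =>
          have hih := ih hreach' rfl
          have hlt := part1 _ _ _ hst (Step.p1 hi hq)
          rcases hih with heq | hlt' <;> simp only at *
          · rw [← heq]
            exact Or.inr hlt.1
          · exact Or.inr (lt_trans hlt.1 hlt')
        | p1to2 hi hnc =>
          exfalso
          have := rtg_true hrest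
          simp at this
        | p2 hi hc hq => simp at hfalse
        | p2inc hi hnc => simp at hfalse
    intro i j z w hz hpath hne
    rcases key (i, false, z) j w hpath hz rfl with h | h
    · exact absurd h hne
    · exact Nat.ne_of_lt h
  · -- Phase 2 squares form a horizontal strip
    have key : ∀ (st : ℕ × Bool × PState) (j : ℕ) (w : PState)
        (h : Relation.ReflTransGen (Step k m b.length) st (j, true, w)),
        Relation.ReflTransGen (Step k m b.length) (1, false, x) st →
        st.2.1 = true →
        st.2.2.box = w.box ∨ st.2.2.box.2 < w.box.2 := by
      intro st j w h
      induction h using Relation.ReflTransGen.head_induction_on with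
      | refl => intro _ _; exact Or.inl rfl
      | head hstep hrest ih =>
        intro hst htrue
        rename_i a' c'
        have hreach' : Relation.ReflTransGen (Step k m b.length) (1, false, x) c' :=
          hst.tail hstep
        cases hstep with
        | p1 hi hq => simp at htrue
        | p1to2 hi hnc => simp at htrue
        | p2 hi hc hq =>
          have hih := ih hreach' rfl
          have hlt := part2 _ _ _ hst (Step.p2 hi hc hq)
          rcases hih with heq | hlt' <;> simp only at *
          · rw [← heq]
            exact Or.inr hlt.2
          · exact Or.inr (lt_trans hlt.2 hlt')
        | p2inc hi hnc =>
          exact ih hreach' rfl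
    intro i j z w hz hpath hne
    rcases key (i, true, z) j w hpath hz rfl with h | h
    · exact absurd h hne
    · exact Nat.ne_of_lt h

end SC
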